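/- In a directed network whose arcs all have cost at most γ̄ ≥ 0, if the state x is admissible, all nodes have nonnegative state, there is a distinguished sink node t with x_t = 0, and every node has a directed path to t, then the total number of tokens V(x) = Σ_i x_i satisfies V(x) ≤ γ̄·|N|·(|N|−1)/2. -/

import Mathlib

def arcCost {V : Type*} (γ : V → V → ℤ) (p : List V) : ℤ :=
  ((p.zip p.tail).map fun q => γ q.1 q.2).sum

def IsWalk {V : Type*} (A : V → V → Prop) (i j : V) (p : List V) : Prop :=
  p.Chain' A ∧ p.head? = some i ∧ p.getLast? = some j

def IsPath {V : Type*} (A : V → V → Prop) (i j : V) (p : List V) : Prop :=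
  IsWalk A i j p ∧ p.Nodup

/-- A directed circuit: a walk of at least one arc whose first and last nodes coincide. -/
def IsCircuit {V : Type*} (A : V → V → Prop) (p : List V) : Prop :=
  p.Chain' A ∧ 2 ≤ p.length ∧ p.head? = p.getLast?

/-- boundedness of admissible states.  If all arc costs are at most
`γbar ≥ 0`, the state is admissible, nonnegative, zero at the sink `t`, and every node
has a directed path to `t`, then the total number of tokens is at most
`γbar·|N|·(|N|−1)/2`. -/
theorem total_tokens_bounded {V : Type*} [Fintype V] (A : V → V → Prop)
    (γ : V → V → ℤ) (γbar : ℤ) (x : V → ℤ) (t : V)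
    (hγbar : 0 ≤ γbar)
    (hbound : ∀ i j, A i j → γ i j ≤ γbar)
    (hadm : ∀ i j, A i j → x i - x j ≤ γ i j)
    (hpos : ∀ i, 0 ≤ x i)
    (hsink : x t = 0)
    (hreach : ∀ i, ∃ p, IsPath A i t p) :
    ∑ i, x i ≤ γbar * (Fintype.card V : ℤ) * ((Fintype.card V : ℤ) - 1) / 2 := by

  classical
  -- pick a node with maximal state
  obtain ⟨i0, -, hmax⟩ :=
    Finset.exists_max_image (Finset.univ : Finset V) x ⟨t, Finset.mem_univ t⟩
  obtain ⟨p, ⟨⟨hchain, hhead, hlast⟩, hnodup⟩⟩ := hreach i0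
  set q : List V := p.reverse with hq
  have hqnodup : q.Nodup := List.nodup_reverse.mpr hnodup
  have hqchain : q.Chain' (fun a b => A b a) := by
    rw [hq]; exact List.isChain_reverse.mpr hchain
  have hqhead : q.head? = some t := by rw [hq, List.head?_reverse]; exact hlast
  have hqlast : q.getLast? = some i0 := by rw [hq, List.getLast?_reverse]; exact hhead
  set m : ℕ := q.length with hm
  have hm1 : 1 ≤ m := by
    rcases q with _ | ⟨a, q'⟩
    · simp at hqhead
    · simp [hm]
  -- key pointwise bound along the reversed path
  have hstep : ∀ a b, A b a → x b ≤ x a + γbar := fun a b hab => by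
    have := hadm b a hab; have := hbound b a hab; linarith
  have key : ∀ s (h : s < m), x (q.get ⟨s, h⟩) ≤ γbar * s := by
    intro s
    induction s with
    | zero =>
      intro h
      have h0 : q.get ⟨0, h⟩ = t := by
        have hne : q ≠ [] := List.ne_nil_of_length_pos h
        have h1 : q.head? = some (q.head hne) := List.head?_eq_head hne
        rw [hqhead] at h1
        rw [List.get_mk_zero]
        exact (Option.some_inj.mp h1).symm
      rw [h0, hsink]
      norm_num
    | succ s ih =>
      intro h
      have hs : s < m := Nat.lt_of_succ_lt h
      have harc : A (q.get ⟨s + 1, h⟩) (q.get ⟨s, hs⟩) := by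
        have := List.isChain_iff_getElem.mp hqchain s (by omega)
        exact this
      have h1 := hstep _ _ harc
      have h2 := ih hs
      push_cast
      linarith
  -- the maximum value is bounded
  have hi0 : x i0 ≤ γbar * ((m : ℤ) - 1) := by
    have hlt : m - 1 < m := by omega
    have : q.getLast? = some (q.get ⟨m - 1, hlt⟩) := by
      rw [List.getLast?_eq_getLast (by intro h; rw [h] at hqhead; simp at hqhead),
        List.getLast_eq_getElem]
      rfl
    rw [hqlast] at this
    have h0 := key (m - 1) hlt
    rw [← Option.some_inj.mp this] at h0
    calc x i0 ≤ γbar * ((m - 1 : ℕ) : ℤ) := h0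
      _ ≤ γbar * ((m : ℤ) - 1) := by
          have : ((m - 1 : ℕ) : ℤ) = (m : ℤ) - 1 := by omega
          rw [this]
  -- sum over the path
  have hpathsum : 2 * ∑ i ∈ q.toFinset, x i ≤ γbar * (m : ℤ) * ((m : ℤ) - 1) := by
    have e1 : ∑ i ∈ q.toFinset, x i = (q.map x).sum := List.sum_toFinset x hqnodup
    have e2 : (q.map x).sum = ∑ i : Fin m, x (q.get i) := by
      conv_lhs => rw [← List.ofFn_get q, List.map_ofFn]
      rw [List.sum_ofFn]
      rfl
    have e3 : ∑ i : Fin m, x (q.get i) ≤ ∑ i : Fin m, γbar * (i : ℤ) :=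
      Finset.sum_le_sum fun i _ => key i i.isLt
    have e4 : ∑ i : Fin m, γbar * (i : ℤ) = γbar * ((∑ i ∈ Finset.range m, i : ℕ) : ℤ) := by
      rw [← Finset.mul_sum, Fin.sum_univ_eq_sum_range (fun i => (i : ℤ)) m]
      push_cast
      ring
    have e5 : ((∑ i ∈ Finset.range m, i : ℕ) : ℤ) * 2 = ((m * (m - 1) : ℕ) : ℤ) := by
      exact_mod_cast congrArg (fun k : ℕ => (k : ℤ)) (Finset.sum_range_id_mul_two m)
    have e6 : ((m * (m - 1) : ℕ) : ℤ) = (m : ℤ) * ((m : ℤ) - 1) := by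
      push_cast [Nat.cast_sub hm1]
      ring
    rw [e1, e2]
    nlinarith [e3]
  -- cardinalities
  have hcard : q.toFinset.card = m := List.toFinset_card_of_nodup hqnodup
  have hmn : m ≤ Fintype.card V := by
    rw [← hcard]; exact Finset.card_le_univ _
  -- off-path sum
  have hoff : ∑ i ∈ q.toFinsetᶜ, x i ≤ ((Fintype.card V - m : ℕ) : ℤ) * (γbar * ((m : ℤ) - 1)) := by
    have := Finset.sum_le_card_nsmul q.toFinsetᶜ x (γbar * ((m : ℤ) - 1))
      (fun i _ => le_trans (hmax i (Finset.mem_univ i)) hi0)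
    rw [Finset.card_compl, hcard] at this
    simpa [nsmul_eq_mul] using this
  have hsplit : ∑ i ∈ q.toFinset, x i + ∑ i ∈ q.toFinsetᶜ, x i = ∑ i, x i :=
    Finset.sum_add_sum_compl _ _
  -- final arithmetic
  rw [Int.le_ediv_iff_mul_le (by norm_num : (0:ℤ) < 2)]
  have hNM : (m : ℤ) ≤ (Fintype.card V : ℤ) := by exact_mod_cast hmn
  have hM1 : (1 : ℤ) ≤ (m : ℤ) := by exact_mod_cast hm1
  have hdiff : ((Fintype.card V - m : ℕ) : ℤ) = (Fintype.card V : ℤ) - (m : ℤ) := by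
    push_cast [Nat.cast_sub hmn]
    ring
  rw [hdiff] at hoff
  nlinarith [hpathsum, hoff, hsplit,
    mul_nonneg hγbar (mul_self_nonneg ((Fintype.card V : ℤ) - (m : ℤ))),
    mul_nonneg hγbar (sub_nonneg.mpr hNM)]
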